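/- Let φ : ℝⁿ → ℝ and fix k ∈ ℕ, k ≥ 1. Let Ã be a set of points x such that there exists p_x ∈ ℝⁿ with |p_x| ≤ k and φ(x) ≤ φ(z) − ⟨p_x, x − z⟩ + k|x − z|² for all z ∈ closedBall(x, 1/k). Suppose Ã ⊆ B(x̄, 1/(2k)) for some x̄. Define φ̃(x) := sup_{y ∈ Ã} ( φ(y) + ⟨p_y, y − x⟩ − k|y − x|² ) for x ∈ B(x̄, 1/(2k)). Then φ̃(x) = φ(x) for every x ∈ Ã. -/

import Mathlib

open Set Metric

theorem stmt2 {n : ℕ} (φ : EuclideanSpace ℝ (Fin n) → ℝ) (k : ℕ) (hk : 1 ≤ k)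
    (p : EuclideanSpace ℝ (Fin n) → EuclideanSpace ℝ (Fin n))
    (Atil : Set (EuclideanSpace ℝ (Fin n))) (x₀ : EuclideanSpace ℝ (Fin n))
    (hsub : Atil ⊆ ball x₀ (1 / (2 * k)))
    (hsupp : ∀ x ∈ Atil, ‖p x‖ ≤ k ∧ ∀ z ∈ closedBall x (1 / k),
      φ x ≤ φ z - (inner ℝ (p x) (x - z) : ℝ) + k * ‖x - z‖ ^ 2) :
    ∀ x ∈ Atil,
      sSup ((fun y => φ y + (inner ℝ (p y) (y - x) : ℝ) - k * ‖y - x‖ ^ 2) '' Atil) = φ x := by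
  intro x hx
  have hub : ∀ v ∈ (fun y => φ y + (inner ℝ (p y) (y - x) : ℝ) - k * ‖y - x‖ ^ 2) '' Atil,
      v ≤ φ x := by
    rintro v ⟨y, hy, rfl⟩
    have hmem : x ∈ closedBall y (1 / k) := by
      have h1 := hsub hy
      have h2 := hsub hx
      rw [mem_ball] at h1 h2
      rw [mem_closedBall]
      have : dist x y ≤ dist x x₀ + dist x₀ y := dist_triangle x x₀ y
      rw [dist_comm x₀ y] at this
      have hk0 : (k : ℝ) ≠ 0 := by positivity
      have hk2 : (1 : ℝ) / (2 * k) + 1 / (2 * k) = 1 / k := by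
        field_simp
        norm_num
      linarith
    have := (hsupp y hy).2 x hmem
    dsimp only
    linarith
  refine le_antisymm (csSup_le ⟨_, Set.mem_image_of_mem _ hx⟩ hub) ?_
  have hmem : φ x ∈ (fun y => φ y + (inner ℝ (p y) (y - x) : ℝ) - k * ‖y - x‖ ^ 2) '' Atil := by
    refine ⟨x, hx, ?_⟩
    simp
  exact le_csSup ⟨φ x, hub⟩ hmem
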